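/- Let ℚ̄ be an algebraic closure of ℚ. For every c ∈ ℚ̄, the polynomial (X − c)·(X⁷ − X³ − 1) is not a square in ℚ̄[X]; that is, there is no polynomial G ∈ ℚ̄[X] with G² = (X − c)·(X⁷ − X³ − 1). -/

import Mathlib

open Polynomial

private lemma no_common_root {K : Type*} [Field K] [CharZero K] (r : K)
    (h1 : r ^ 7 - r ^ 3 - 1 = 0) (h2 : 7 * r ^ 6 - 3 * r ^ 2 = 0) : False := by
  have h : (1 : K) = 0 := by
    linear_combination (-1 - (115248/816631) * r^2 + (470596/816631) * r^3
        - (16128/816631) * r^4 + (65856/816631) * r^5) * h1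
      + ((38416/816631) + (115345/816631) * r + (5376/816631) * r^2 + (16464/816631) * r^3
        - (67228/816631) * r^4 + (2304/816631) * r^5 - (9408/816631) * r^6) * h2
  exact one_ne_zero h

/-- Let `ℚ̄` be an algebraic closure of `ℚ`. For every `c ∈ ℚ̄`,
the polynomial `(X − c)·(X⁷ − X³ − 1)` is not a square in `ℚ̄[X]`. -/
theorem not_isSquare_X_sub_C_mul {Qbar : Type*} [Field Qbar] [Algebra ℚ Qbar]
    [IsAlgClosure ℚ Qbar] (c : Qbar) :
    ¬ ∃ G : Polynomial Qbar,
      G ^ 2 = (X - C c) * (X ^ 7 - X ^ 3 - 1) := by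
  classical
  haveI : CharZero Qbar := charZero_of_injective_algebraMap (algebraMap ℚ Qbar).injective
  haveI : IsAlgClosed Qbar := IsAlgClosure.isAlgClosed (R := ℚ)
  set f : Polynomial Qbar := X ^ 7 - X ^ 3 - 1 with hf
  have hdf : f.derivative = C 7 * X ^ 6 - C 3 * X ^ 2 := by
    rw [hf]
    simp [derivative_X_pow]
    simp only [← C_1, ← C_add]
    norm_num
  have hdeg : f.natDegree = 7 := by rw [hf]; compute_degree!
  have hf0 : f ≠ 0 := fun h => by simp [h] at hdeg
  -- every root of f is simple
  have hsimple : ∀ a : Qbar, f.IsRoot a → f.rootMultiplicity a = 1 := by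
    intro a ha
    have hda : ¬ f.derivative.IsRoot a := by
      intro hd
      have e1 : a ^ 7 - a ^ 3 - 1 = 0 := by simpa [hf, IsRoot] using ha
      have e2 : 7 * a ^ 6 - 3 * a ^ 2 = 0 := by
        have := hd
        rw [hdf] at this
        simpa [IsRoot] using this
      exact no_common_root a e1 e2
    have hpos : 0 < f.rootMultiplicity a := (rootMultiplicity_pos hf0).2 ha
    have hd0 : f.derivative.rootMultiplicity a = 0 := rootMultiplicity_eq_zero hda
    have := derivative_rootMultiplicity_of_root ha
    omega
  -- f has a root different from c
  have hcard : f.roots.card = 7 := by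
    rw [← hdeg]
    exact (splits_iff_card_roots.mp (IsAlgClosed.splits f))
  have hex : ∃ a ∈ f.roots, a ≠ c := by
    by_contra h
    push_neg at h
    have : f.roots.count c = f.roots.card := Multiset.count_eq_card.mpr fun a ha => (h a ha).symm
    rw [count_roots, hcard] at this
    rcases eq_or_ne (f.rootMultiplicity c) 0 with h0 | h0
    · omega
    · have : f.IsRoot c := by
        by_contra hc; exact h0 (rootMultiplicity_eq_zero hc)
      have := hsimple c this
      omega
  obtain ⟨a, haroots, hac⟩ := hex
  have ha : f.IsRoot a := isRoot_of_mem_roots haroots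
  rintro ⟨G, hG⟩
  have hRHS : (X - C c) * f ≠ 0 :=
    mul_ne_zero (X_sub_C_ne_zero c) hf0
  have hG0 : G ≠ 0 := by
    intro h
    rw [h] at hG
    exact hRHS (by simpa using hG.symm)
  have hmulRHS : ((X - C c) * f).rootMultiplicity a = 1 := by
    rw [rootMultiplicity_mul hRHS, rootMultiplicity_eq_zero (by simpa [IsRoot, sub_eq_zero] using hac),
      hsimple a ha]
  have hmulLHS : (G ^ 2).rootMultiplicity a = 2 * G.rootMultiplicity a := by
    rw [sq, rootMultiplicity_mul (mul_ne_zero hG0 hG0), two_mul]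
  rw [hG, hmulRHS] at hmulLHS
  omega
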